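/- In the special case B = 3, N = 4, the function π(r) = λ_{r(1)}·λ_{r(2)} / (3·Λ·(λ_{r(2)} + λ_{r(3)})) satisfies the MRU full balance equations: for every 3-permutation r of {1,2,3,4}, (Λ - λ_{r(1)})·π(r) = λ_{r(1)}·π(M_n⁻¹(r)) + Σ_{j=2}^{3} λ_{r(1)}·π(H_j⁻¹(r)), where n is the unique object not in r. -/
import Mathlib
set_option maxHeartbeats 1000000


open Finset

/-- MRU invariant candidate for `B = 3`, `N = 4`:
`π(r) = λ_{r(1)} λ_{r(2)} / (3 Λ (λ_{r(2)} + λ_{r(3)}))`. -/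
noncomputable def piMRU34 (lam : Fin 4 → ℝ) (r : Fin 3 → Fin 4) : ℝ :=
  lam (r 0) * lam (r 1) / (3 * (∑ n, lam n) * (lam (r 1) + lam (r 2)))

/-- For `B = 3`, `N = 4`, `π(r) = λ_{r(1)} λ_{r(2)} / (3 Λ (λ_{r(2)} + λ_{r(3)}))`
satisfies the MRU full balance equations: the miss pre-image is
`M_n⁻¹(r) = (n, r(2), r(3))` (the missed object `n ∉ r` was youngest), and the hit
pre-images are `H_2⁻¹(r) = (r(2), r(1), r(3))` and `H_3⁻¹(r) = (r(2), r(3), r(1))`. -/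
private lemma mru_key (a b c d : ℝ) (ha : 0 < a) (hb : 0 < b) (hc : 0 < c) (hd : 0 < d) :
    ((a + b + c + d) - a) * (a * b / (3 * (a + b + c + d) * (b + c))) =
      a * (d * b / (3 * (a + b + c + d) * (b + c)))
        + (a * (b * a / (3 * (a + b + c + d) * (a + c)))
            + a * (b * c / (3 * (a + b + c + d) * (c + a)))) := by
  have h1 : b + c ≠ 0 := by positivity
  have h2 : a + c ≠ 0 := by positivity
  have h3 : c + a ≠ 0 := by positivity
  have h4 : a + b + c + d ≠ 0 := by positivity
  field_simp
  ring

theorem mru_balance_B3N4 (lam : Fin 4 → ℝ) (hlam : ∀ n, 0 < lam n)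
    (Λ : ℝ) (hΛ : Λ = ∑ n, lam n)
    (r : Fin 3 → Fin 4) (hr : Function.Injective r)
    (n : Fin 4) (hn : ∀ k, r k ≠ n) :
    (Λ - lam (r 0)) * piMRU34 lam r =
      lam (r 0) * piMRU34 lam ![n, r 1, r 2]
        + (lam (r 0) * piMRU34 lam ![r 1, r 0, r 2]
            + lam (r 0) * piMRU34 lam ![r 1, r 2, r 0]) := by
  have h01 : r 0 ≠ r 1 := fun h => absurd (hr h) (by decide)
  have h02 : r 0 ≠ r 2 := fun h => absurd (hr h) (by decide)
  have h12 : r 1 ≠ r 2 := fun h => absurd (hr h) (by decide)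
  have hU : (Finset.univ : Finset (Fin 4)) = {r 0, r 1, r 2, n} := by
    symm
    apply Finset.eq_univ_of_card
    rw [Finset.card_insert_of_notMem (by simp [h01, h02, hn 0]),
      Finset.card_insert_of_notMem (by simp [h12, hn 1]),
      Finset.card_insert_of_notMem (by simp [hn 2]), Finset.card_singleton]
    rfl
  have hsum : ∑ m, lam m = lam (r 0) + lam (r 1) + lam (r 2) + lam n := by
    rw [hU, Finset.sum_insert (by simp [h01, h02, hn 0]),
      Finset.sum_insert (by simp [h12, hn 1]),
      Finset.sum_insert (by simp [hn 2]), Finset.sum_singleton]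
    ring
  simp only [piMRU34, Matrix.cons_val_zero, Matrix.cons_val_one, Matrix.head_cons,
    Matrix.cons_val_two, Matrix.tail_cons, hsum, hΛ]
  exact mru_key _ _ _ _ (hlam _) (hlam _) (hlam _) (hlam _)
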